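/- Let M be a smooth n-manifold and let σ, ν : M → ℝ^{n+2} be an immersion of M into ℍ^{n+1} with unit normal ν having small principal curvatures. Let p, q ∈ M with p ≠ q, and suppose p and q are joined by a unit-speed geodesic of the first fundamental form of σ. Then ⟨σ(q), σ(p) + ν(p)⟩ < −1 and ⟨σ(q), σ(p) − ν(p)⟩ < −1; that is, σ(q) lies in the interior of the concave side of each of the two horospheres tangent to the immersed hypersurface at σ(p). -/

import Mathlib

open scoped Manifold

/-- The Minkowski bilinear form on `ℝ^{n+2}`:
`⟨x,y⟩ = x₁y₁ + ⋯ + x_{n+1}y_{n+1} − x_{n+2}y_{n+2}`. -/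
noncomputable def mink (n : ℕ) (x y : Fin (n + 2) → ℝ) : ℝ :=
  (∑ i : Fin (n + 1), x i.castSucc * y i.castSucc) -
    x (Fin.last (n + 1)) * y (Fin.last (n + 1))

section MinkHelpers

variable {n : ℕ}

lemma mink_comm (x y : Fin (n+2) → ℝ) : mink n x y = mink n y x := by
  simp [mink, mul_comm]

lemma mink_add_left (x y z : Fin (n+2) → ℝ) :
    mink n (x + y) z = mink n x z + mink n y z := by
  simp [mink, add_mul, Finset.sum_add_distrib]; ring

lemma mink_sub_left (x y z : Fin (n+2) → ℝ) :
    mink n (x - y) z = mink n x z - mink n y z := by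
  simp [mink, sub_mul, Finset.sum_sub_distrib]; ring

lemma mink_smul_left (r : ℝ) (x y : Fin (n+2) → ℝ) :
    mink n (r • x) y = r * mink n x y := by
  simp [mink, smul_eq_mul, mul_assoc, Finset.mul_sum, mul_sub]

lemma mink_add_right (x y z : Fin (n+2) → ℝ) :
    mink n x (y + z) = mink n x y + mink n x z := by
  rw [mink_comm, mink_add_left, mink_comm y x, mink_comm z x]

lemma mink_sub_right (x y z : Fin (n+2) → ℝ) :
    mink n x (y - z) = mink n x y - mink n x z := by
  rw [mink_comm, mink_sub_left, mink_comm y x, mink_comm z x]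

lemma mink_smul_right (r : ℝ) (x y : Fin (n+2) → ℝ) :
    mink n x (r • y) = r * mink n x y := by
  rw [mink_comm, mink_smul_left, mink_comm]

lemma mink_zero_right (x : Fin (n+2) → ℝ) : mink n x 0 = 0 := by simp [mink]

lemma mink_zero_left (x : Fin (n+2) → ℝ) : mink n 0 x = 0 := by simp [mink]

lemma mink_nonneg_of_orth {g x : Fin (n+2) → ℝ} (hg : mink n g g = -1)
    (hgl : 0 < g (Fin.last (n+1))) (hx : mink n x g = 0) : 0 ≤ mink n x x := by
  have hCS := Finset.sum_mul_sq_le_sq_mul_sq Finset.univ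
    (fun i : Fin (n+1) => x i.castSucc) (fun i : Fin (n+1) => g i.castSucc)
  simp only [pow_two] at hCS
  have hxs : (0:ℝ) ≤ ∑ i : Fin (n+1), x i.castSucc * x i.castSucc :=
    Finset.sum_nonneg fun i _ => mul_self_nonneg _
  simp only [mink] at hg hx ⊢
  set T := ∑ i : Fin (n+1), x i.castSucc * g i.castSucc with hTdef
  set Sx := ∑ i : Fin (n+1), x i.castSucc * x i.castSucc with hSxdef
  set Sg := ∑ i : Fin (n+1), g i.castSucc * g i.castSucc with hSgdef
  set xL := x (Fin.last (n+1))
  set gL := g (Fin.last (n+1))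
  have hT : T = xL * gL := by linarith
  have hSg : Sg = gL * gL - 1 := by linarith
  rw [hT, hSg] at hCS
  nlinarith [hCS, hxs, mul_pos hgl hgl]

lemma mink_sq_le_of_orth {g x y : Fin (n+2) → ℝ} (hg : mink n g g = -1)
    (hgl : 0 < g (Fin.last (n+1))) (hx : mink n x g = 0) (hy : mink n y g = 0) :
    (mink n x y)^2 ≤ mink n x x * mink n y y := by
  have key : ∀ r : ℝ, 0 ≤ (mink n y y) * (r*r) + (2 * mink n x y) * r + mink n x x := by
    intro r
    have horth : mink n (r • y + x) g = 0 := by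
      rw [mink_add_left, mink_smul_left, hx, hy]; ring
    have h0 := mink_nonneg_of_orth hg hgl horth
    have hexp : mink n (r • y + x) (r • y + x) =
        (mink n y y) * (r*r) + (2 * mink n x y) * r + mink n x x := by
      simp only [mink_add_left, mink_add_right, mink_smul_left, mink_smul_right,
        mink_comm x y]
      ring
    linarith [hexp ▸ h0]
  have hd := discrim_le_zero key
  rw [discrim] at hd
  nlinarith [hd]

lemma mink_neg_of_null {ξ h : Fin (n+2) → ℝ} (hξ : mink n ξ ξ = 0)
    (hξl : 0 < ξ (Fin.last (n+1))) (hh : mink n h h = -1)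
    (hhl : 0 < h (Fin.last (n+1))) : mink n h ξ < 0 := by
  have hCS := Finset.sum_mul_sq_le_sq_mul_sq Finset.univ
    (fun i : Fin (n+1) => h i.castSucc) (fun i : Fin (n+1) => ξ i.castSucc)
  simp only [pow_two] at hCS
  simp only [mink] at hh hξ ⊢
  set T := ∑ i : Fin (n+1), h i.castSucc * ξ i.castSucc
  set Sh := ∑ i : Fin (n+1), h i.castSucc * h i.castSucc
  set Sξ := ∑ i : Fin (n+1), ξ i.castSucc * ξ i.castSucc
  set hL := h (Fin.last (n+1))
  set ξL := ξ (Fin.last (n+1))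
  have h1 : Sh = hL * hL - 1 := by linarith
  have h2 : Sξ = ξL * ξL := by linarith
  rw [h1, h2] at hCS
  nlinarith [hCS, mul_pos hhl hξl, mul_pos (mul_pos hhl hξl) (mul_pos hhl hξl)]

lemma nuL_sq_lt {g v : Fin (n+2) → ℝ} (hg : mink n g g = -1)
    (hgl : 0 < g (Fin.last (n+1))) (hv : mink n v v = 1) (hgv : mink n g v = 0) :
    v (Fin.last (n+1)) * v (Fin.last (n+1)) <
      g (Fin.last (n+1)) * g (Fin.last (n+1)) := by
  have hCS := Finset.sum_mul_sq_le_sq_mul_sq Finset.univ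
    (fun i : Fin (n+1) => g i.castSucc) (fun i : Fin (n+1) => v i.castSucc)
  simp only [pow_two] at hCS
  simp only [mink] at hg hv hgv
  set T := ∑ i : Fin (n+1), g i.castSucc * v i.castSucc
  set Sg := ∑ i : Fin (n+1), g i.castSucc * g i.castSucc
  set Sv := ∑ i : Fin (n+1), v i.castSucc * v i.castSucc
  set gL := g (Fin.last (n+1))
  set vL := v (Fin.last (n+1))
  have h1 : Sg = gL * gL - 1 := by linarith
  have h2 : Sv = vL * vL + 1 := by linarith
  have h3 : T = gL * vL := by linarith
  rw [h1, h2, h3] at hCS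
  nlinarith [hCS]

lemma mink_w_sq_le {g N ξ : Fin (n+2) → ℝ} (hg : mink n g g = -1)
    (hgl : 0 < g (Fin.last (n+1))) (hN : mink n N N = 1) (hgN : mink n g N = 0)
    (hξ : mink n ξ ξ = 0) :
    (mink n N ξ) * (mink n N ξ) ≤ (mink n g ξ) * (mink n g ξ) := by
  have hNg : mink n N g = 0 := (mink_comm _ _).trans hgN
  have horth : mink n (ξ + (mink n g ξ) • g - (mink n N ξ) • N) g = 0 := by
    rw [mink_sub_left, mink_add_left, mink_smul_left, mink_smul_left, hg, hNg,
      mink_comm ξ g]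
    ring
  have h0 := mink_nonneg_of_orth hg hgl horth
  have hexp : mink n (ξ + (mink n g ξ) • g - (mink n N ξ) • N)
      (ξ + (mink n g ξ) • g - (mink n N ξ) • N) =
      (mink n g ξ) * (mink n g ξ) - (mink n N ξ) * (mink n N ξ) := by
    simp only [mink_add_left, mink_add_right, mink_sub_left, mink_sub_right,
      mink_smul_left, mink_smul_right, mink_comm ξ g, mink_comm ξ N, mink_comm N g,
      hg, hN, hgN, hξ]
    ring
  rw [hexp] at h0
  linarith

lemma hasDerivWithinAt_mink {f g : ℝ → Fin (n + 2) → ℝ} {f' g' : Fin (n + 2) → ℝ}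
    {s : Set ℝ} {t : ℝ}
    (hf : HasDerivWithinAt f f' s t) (hg : HasDerivWithinAt g g' s t) :
    HasDerivWithinAt (fun u => mink n (f u) (g u))
      (mink n f' (g t) + mink n (f t) g') s t := by
  have hcoord : ∀ (h : ℝ → Fin (n+2) → ℝ) (h' : Fin (n+2) → ℝ),
      HasDerivWithinAt h h' s t →
      ∀ i, HasDerivWithinAt (fun u => h u i) (h' i) s t := by
    intro h h' hh i
    exact (ContinuousLinearMap.proj (R := ℝ) (φ := fun _ : Fin (n+2) => ℝ)
      i).hasFDerivAt.comp_hasDerivWithinAt t hh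
  have hsum : HasDerivWithinAt
      (fun u => ∑ i : Fin (n+1), f u i.castSucc * g u i.castSucc)
      (∑ i : Fin (n+1),
        (f' i.castSucc * g t i.castSucc + f t i.castSucc * g' i.castSucc)) s t :=
    HasDerivWithinAt.fun_sum fun i _ =>
      (hcoord f f' hf i.castSucc).mul (hcoord g g' hg i.castSucc)
  have hlast := (hcoord f f' hf (Fin.last _)).mul (hcoord g g' hg (Fin.last _))
  have h2 := hsum.sub hlast
  convert h2 using 1
  · rfl
  · rfl
  · rfl
  simp [mink, Finset.sum_add_distrib]
  ring

end MinkHelpers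

/-- If `σ : M → ℍ^{n+1}` is an immersion with unit normal `ν` having small principal
curvatures, and `p ≠ q` are joined by a unit-speed geodesic of the first fundamental
form of `σ`, then `σ(q)` lies in the interior of the concave side of each of the two
horospheres tangent to the hypersurface at `σ(p)`. -/
theorem concave_side_of_tangent_horospheres
    {n : ℕ} {M : Type*} [TopologicalSpace M]
    [ChartedSpace (EuclideanSpace ℝ (Fin n)) M]
    [IsManifold (𝓡 n) (⊤ : ℕ∞) M]
    (σ ν : M → Fin (n + 2) → ℝ)
    (hσ : ContMDiff (𝓡 n) 𝓘(ℝ, Fin (n + 2) → ℝ) (⊤ : ℕ∞) σ)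
    (hν : ContMDiff (𝓡 n) 𝓘(ℝ, Fin (n + 2) → ℝ) (⊤ : ℕ∞) ν)
    (hσσ : ∀ p, mink n (σ p) (σ p) = -1)
    (hpos : ∀ p, 0 < σ p (Fin.last (n + 1)))
    (hνν : ∀ p, mink n (ν p) (ν p) = 1)
    (hσν : ∀ p, mink n (σ p) (ν p) = 0)
    (himm : ∀ p, Function.Injective (mfderiv (𝓡 n) 𝓘(ℝ, Fin (n + 2) → ℝ) σ p))
    (hnormal : ∀ p (v : EuclideanSpace ℝ (Fin n)),
      mink n (mfderiv (𝓡 n) 𝓘(ℝ, Fin (n + 2) → ℝ) σ p v) (ν p) = 0)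
    (hsmall : ∀ p (v : EuclideanSpace ℝ (Fin n)), v ≠ 0 →
      mink n (mfderiv (𝓡 n) 𝓘(ℝ, Fin (n + 2) → ℝ) ν p v)
          (mfderiv (𝓡 n) 𝓘(ℝ, Fin (n + 2) → ℝ) ν p v) <
        mink n (mfderiv (𝓡 n) 𝓘(ℝ, Fin (n + 2) → ℝ) σ p v)
          (mfderiv (𝓡 n) 𝓘(ℝ, Fin (n + 2) → ℝ) σ p v))
    (p q : M) (hpq : p ≠ q)
    (a b : ℝ) (hab : a < b) (c : ℝ → M)
    (hc : ContMDiff 𝓘(ℝ, ℝ) (𝓡 n) (⊤ : ℕ∞) c)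
    (hca : c a = p) (hcb : c b = q)
    (γ' γ'' : ℝ → Fin (n + 2) → ℝ)
    (hd1 : ∀ t ∈ Set.Icc a b,
      HasDerivWithinAt (fun s => σ (c s)) (γ' t) (Set.Icc a b) t)
    (hd2 : ∀ t ∈ Set.Icc a b, HasDerivWithinAt γ' (γ'' t) (Set.Icc a b) t)
    (hspeed : ∀ t ∈ Set.Icc a b, mink n (γ' t) (γ' t) = 1)
    (hgeo : ∀ t ∈ Set.Icc a b, ∃ k : ℝ, γ'' t - σ (c t) = k • ν (c t)) :
    mink n (σ q) (σ p + ν p) < -1 ∧ mink n (σ q) (σ p - ν p) < -1 := by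
  subst hca
  subst hcb
  have hIcc : UniqueDiffOn ℝ (Set.Icc a b) := uniqueDiffOn_Icc hab
  have haI : a ∈ Set.Icc a b := Set.left_mem_Icc.2 hab.le
  have hbI : b ∈ Set.Icc a b := Set.right_mem_Icc.2 hab.le
  -- the curve in ambient space and the normal along it
  set γ : ℝ → Fin (n + 2) → ℝ := fun s => σ (c s) with hγdef
  set N : ℝ → Fin (n + 2) → ℝ := fun s => ν (c s) with hNdef
  have hone : (1 : WithTop ℕ∞) ≤ ((⊤ : ℕ∞) : WithTop ℕ∞) := by exact_mod_cast le_top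
  have hγc : ContDiff ℝ ((⊤ : ℕ∞) : WithTop ℕ∞) γ := contMDiff_iff_contDiff.mp (hσ.comp hc)
  have hNc : ContDiff ℝ ((⊤ : ℕ∞) : WithTop ℕ∞) N := contMDiff_iff_contDiff.mp (hν.comp hc)
  have hγd : ∀ t, HasDerivAt γ (deriv γ t) t := fun t =>
    (hγc.differentiable (by simp) t).hasDerivAt
  have hNd : ∀ t, HasDerivAt N (deriv N t) t := fun t =>
    (hNc.differentiable (by simp) t).hasDerivAt
  have Hγγ : ∀ t, mink n (γ t) (γ t) = -1 := fun t => hσσ (c t)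
  have HNN : ∀ t, mink n (N t) (N t) = 1 := fun t => hνν (c t)
  have HγN : ∀ t, mink n (γ t) (N t) = 0 := fun t => hσν (c t)
  have HNγ : ∀ t, mink n (N t) (γ t) = 0 := fun t => (mink_comm _ _).trans (hσν (c t))
  have Hpos : ∀ t, 0 < γ t (Fin.last (n + 1)) := fun t => hpos (c t)
  -- identification of derivatives with manifold derivatives
  set v : ℝ → EuclideanSpace ℝ (Fin n) :=
    fun t => mfderiv 𝓘(ℝ, ℝ) (𝓡 n) c t
      (show TangentSpace 𝓘(ℝ, ℝ) t from (1 : ℝ)) with hvdef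
  have hvγ : ∀ t, deriv γ t =
      mfderiv (𝓡 n) 𝓘(ℝ, Fin (n + 2) → ℝ) σ (c t) (v t) := by
    intro t
    have h1 : mfderiv 𝓘(ℝ, ℝ) 𝓘(ℝ, Fin (n + 2) → ℝ) (σ ∘ c) t
        = (mfderiv (𝓡 n) 𝓘(ℝ, Fin (n + 2) → ℝ) σ (c t)).comp
            (mfderiv 𝓘(ℝ, ℝ) (𝓡 n) c t) :=
      mfderiv_comp t (hσ.mdifferentiableAt (by simp)) (hc.mdifferentiableAt (by simp))
    have h2 : mfderiv 𝓘(ℝ, ℝ) 𝓘(ℝ, Fin (n + 2) → ℝ) (σ ∘ c) t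
        = fderiv ℝ (σ ∘ c) t := mfderiv_eq_fderiv
    have h3 : deriv γ t = fderiv ℝ (σ ∘ c) t 1 := by
      rw [fderiv_apply_one_eq_deriv]
      rfl
    rw [h3, ← h2, h1]
    rfl
  have hvN : ∀ t, deriv N t =
      mfderiv (𝓡 n) 𝓘(ℝ, Fin (n + 2) → ℝ) ν (c t) (v t) := by
    intro t
    have h1 : mfderiv 𝓘(ℝ, ℝ) 𝓘(ℝ, Fin (n + 2) → ℝ) (ν ∘ c) t
        = (mfderiv (𝓡 n) 𝓘(ℝ, Fin (n + 2) → ℝ) ν (c t)).comp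
            (mfderiv 𝓘(ℝ, ℝ) (𝓡 n) c t) :=
      mfderiv_comp t (hν.mdifferentiableAt (by simp)) (hc.mdifferentiableAt (by simp))
    have h2 : mfderiv 𝓘(ℝ, ℝ) 𝓘(ℝ, Fin (n + 2) → ℝ) (ν ∘ c) t
        = fderiv ℝ (ν ∘ c) t := mfderiv_eq_fderiv
    have h3 : deriv N t = fderiv ℝ (ν ∘ c) t 1 := by
      rw [fderiv_apply_one_eq_deriv]
      rfl
    rw [h3, ← h2, h1]
    rfl
  -- γ' agrees with deriv γ on the interval
  have hγ' : ∀ t ∈ Set.Icc a b, γ' t = deriv γ t := by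
    intro t ht
    have e1 := (hd1 t ht).derivWithin (hIcc t ht)
    have e2 := ((hγd t).hasDerivWithinAt).derivWithin (hIcc t ht)
    rw [← e1, ← e2]
  -- orthogonality relations
  have o1 : ∀ t ∈ Set.Icc a b, mink n (γ' t) (γ t) = 0 := by
    intro t ht
    have hP := hasDerivWithinAt_mink (hd1 t ht) (hd1 t ht)
    have hconst : (fun u => mink n (γ u) (γ u)) = fun _ => (-1 : ℝ) :=
      funext fun u => hσσ (c u)
    have hP' : HasDerivWithinAt (fun _ : ℝ => (-1 : ℝ))
        (mink n (γ' t) (γ t) + mink n (γ t) (γ' t)) (Set.Icc a b) t := by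
      rw [← hconst]; exact hP
    have hz := (hP'.derivWithin (hIcc t ht)).symm.trans
      ((hasDerivWithinAt_const t (Set.Icc a b) (-1 : ℝ)).derivWithin (hIcc t ht))
    have hcm : mink n (γ t) (γ' t) = mink n (γ' t) (γ t) := mink_comm _ _
    linarith [hz, hcm]
  have o2 : ∀ t ∈ Set.Icc a b, mink n (γ' t) (N t) = 0 := by
    intro t ht
    rw [hγ' t ht, hvγ t]
    exact hnormal (c t) (v t)
  have o2' : ∀ t, mink n (deriv γ t) (N t) = 0 := by
    intro t
    rw [hvγ t]
    exact hnormal (c t) (v t)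
  have o3 : ∀ t, mink n (γ t) (deriv N t) = 0 := by
    intro t
    have hP : HasDerivAt (fun u => mink n (γ u) (N u))
        (mink n (deriv γ t) (N t) + mink n (γ t) (deriv N t)) t := by
      have := hasDerivWithinAt_mink (s := Set.univ)
        ((hγd t).hasDerivWithinAt) ((hNd t).hasDerivWithinAt)
      exact hasDerivWithinAt_univ.mp this
    have hconst : (fun u => mink n (γ u) (N u)) = fun _ => (0 : ℝ) :=
      funext fun u => hσν (c u)
    have hP' : HasDerivAt (fun _ : ℝ => (0 : ℝ))
        (mink n (deriv γ t) (N t) + mink n (γ t) (deriv N t)) t := by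
      rw [← hconst]; exact hP
    have hz := hP'.deriv.symm.trans (deriv_const t (0 : ℝ))
    have := o2' t
    linarith
  -- the second fundamental form identity: ⟨γ'',N⟩ + ⟨γ',N'⟩ = 0 on [a,b]
  have key3 : ∀ t ∈ Set.Icc a b,
      mink n (γ'' t) (N t) + mink n (γ' t) (deriv N t) = 0 := by
    intro t ht
    have hP := hasDerivWithinAt_mink (hd2 t ht) ((hNd t).hasDerivWithinAt)
    have hP' : HasDerivWithinAt (fun _ : ℝ => (0 : ℝ))
        (mink n (γ'' t) (N t) + mink n (γ' t) (deriv N t)) (Set.Icc a b) t :=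
      hP.congr (fun x hx => (o2 x hx).symm) (o2 t ht).symm
    exact (hP'.derivWithin (hIcc t ht)).symm.trans
      ((hasDerivWithinAt_const t (Set.Icc a b) (0 : ℝ)).derivWithin (hIcc t ht))
  -- smallness of the shape operator along the curve
  have hNsmall : ∀ t ∈ Set.Icc a b,
      mink n (deriv N t) (deriv N t) < 1 := by
    intro t ht
    have hvne : v t ≠ 0 := by
      intro h0
      have : γ' t = 0 := by
        rw [hγ' t ht, hvγ t, h0]; exact map_zero _
      have h1 := hspeed t ht
      rw [this, mink_zero_left] at h1
      norm_num at h1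
    have := hsmall (c t) (v t) hvne
    rw [← hvγ t, ← hvN t] at this
    calc mink n (deriv N t) (deriv N t) < mink n (deriv γ t) (deriv γ t) := this
      _ = 1 := by rw [← hγ' t ht]; exact hspeed t ht
  -- the curvature bound |k| < 1
  have hkbound : ∀ t ∈ Set.Icc a b,
      (mink n (γ'' t) (N t)) * (mink n (γ'' t) (N t)) < 1 := by
    intro t ht
    have hkval : mink n (γ'' t) (N t) = - mink n (γ' t) (deriv N t) := by
      linarith [key3 t ht]
    have ho1 : mink n (γ' t) (γ t) = 0 := o1 t ht
    have ho3 : mink n (deriv N t) (γ t) = 0 := (mink_comm _ _).trans (o3 t)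
    have hCS := mink_sq_le_of_orth (hσσ (c t)) (hpos (c t)) ho1 ho3
    have h1 : mink n (γ' t) (γ' t) = 1 := hspeed t ht
    have h2 := hNsmall t ht
    have hN'N' : 0 ≤ mink n (deriv N t) (deriv N t) :=
      mink_nonneg_of_orth (hσσ (c t)) (hpos (c t)) ho3
    rw [hkval]
    nlinarith [hCS, h1, h2, hN'N']
  -- main estimate for a tangent horosphere direction ε = ±1
  have main : ∀ ε : ℝ, ε * ε = 1 →
      mink n (σ (c b)) (σ (c a) + ε • ν (c a)) < -1 := by
    intro ε hε
    set ξ : Fin (n + 2) → ℝ := γ a + ε • N a with hξdef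
    have hξξ : mink n ξ ξ = 0 := by
      simp only [hξdef, mink_add_left, mink_add_right, mink_smul_left,
        mink_smul_right, Hγγ, HNN, HγN, HNγ]
      linear_combination hε
    have hξL : 0 < ξ (Fin.last (n + 1)) := by
      have hnu := nuL_sq_lt (Hγγ a) (Hpos a) (HNN a) (HγN a)
      have hξLval : ξ (Fin.last (n + 1)) =
          γ a (Fin.last (n + 1)) + ε * N a (Fin.last (n + 1)) := by
        rw [hξdef]; simp
      rw [hξLval]
      nlinarith [hnu, Hpos a, hε,
        sq_nonneg (γ a (Fin.last (n + 1)) + ε * N a (Fin.last (n + 1))),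
        sq_nonneg (γ a (Fin.last (n + 1)) - ε * N a (Fin.last (n + 1)))]
    -- the horosphere height function
    set U : ℝ → ℝ := fun t => mink n (γ t) ξ with hUdef
    have hUsm : ContDiff ℝ ((⊤ : ℕ∞) : WithTop ℕ∞) U := by
      have hco : ∀ i : Fin (n + 2), ContDiff ℝ ((⊤ : ℕ∞) : WithTop ℕ∞) (fun t => γ t i) :=
        fun i => (contDiff_pi.mp hγc) i
      have : U = fun t => (∑ i : Fin (n + 1), γ t i.castSucc * ξ i.castSucc) -
          γ t (Fin.last (n + 1)) * ξ (Fin.last (n + 1)) := rfl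
      rw [this]
      exact (ContDiff.sum fun (i : Fin (n + 1)) _ => (hco i.castSucc).mul contDiff_const).sub
        ((hco (Fin.last (n + 1))).mul contDiff_const)
    have hUa : U a = -1 := by
      show mink n (γ a) ξ = -1
      rw [hξdef, mink_add_right, mink_smul_right, Hγγ a, HγN a]
      ring
    have hUneg : ∀ t, U t < 0 := fun t =>
      mink_neg_of_null hξξ hξL (Hγγ t) (Hpos t)
    have hU' : ∀ t ∈ Set.Icc a b,
        HasDerivWithinAt U (mink n (γ' t) ξ) (Set.Icc a b) t := by
      intro t ht
      have := hasDerivWithinAt_mink (hd1 t ht)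
        (hasDerivWithinAt_const t (Set.Icc a b) ξ)
      simpa [mink_zero_right] using this
    have hg1 : ∀ t ∈ Set.Icc a b, deriv U t = mink n (γ' t) ξ := by
      intro t ht
      have e1 := (hU' t ht).derivWithin (hIcc t ht)
      have e2 := ((hUsm.differentiable (by simp) t).hasDerivAt.hasDerivWithinAt).derivWithin
        (hIcc t ht)
      rw [← e2, e1]
    have hg1a : deriv U a = 0 := by
      rw [hg1 a haI, hξdef, mink_add_right, mink_smul_right, o1 a haI, o2 a haI]
      ring
    -- second derivative of U
    have hU2 : ∀ t ∈ Set.Icc a b,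
        HasDerivWithinAt (deriv U) (mink n (γ'' t) ξ) (Set.Icc a b) t := by
      intro t ht
      have h := hasDerivWithinAt_mink (hd2 t ht)
        (hasDerivWithinAt_const t (Set.Icc a b) ξ)
      have h' : HasDerivWithinAt (fun u => mink n (γ' u) ξ)
          (mink n (γ'' t) ξ) (Set.Icc a b) t := by
        simpa [mink_zero_right] using h
      exact h'.congr (fun x hx => hg1 x hx) (hg1 t ht)
    have hU2neg : ∀ t ∈ Set.Icc a b, mink n (γ'' t) ξ < 0 := by
      intro t ht
      obtain ⟨k, hk⟩ := hgeo t ht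
      have hγ'' : γ'' t = γ t + k • N t :=
        (sub_eq_iff_eq_add.mp hk).trans (add_comm _ _)
      have hkval : k = mink n (γ'' t) (N t) := by
        rw [hγ'', mink_add_left, mink_smul_left, HNN t, HγN t]
        ring
      have hval : mink n (γ'' t) ξ = U t + k * mink n (N t) ξ := by
        rw [hγ'', mink_add_left, mink_smul_left]
      have hu : U t < 0 := hUneg t
      have hw : (mink n (N t) ξ) * (mink n (N t) ξ) ≤ U t * U t :=
        mink_w_sq_le (Hγγ t) (Hpos t) (HNN t) (HγN t) hξξ
      have hkk : k * k < 1 := by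
        rw [hkval]; exact hkbound t ht
      rw [hval]
      set u := U t
      set w := mink n (N t) ξ
      have h1 : k * k * (w * w) ≤ k * k * (u * u) :=
        mul_le_mul_of_nonneg_left hw (mul_self_nonneg k)
      have h2 : k * k * (u * u) < 1 * (u * u) :=
        mul_lt_mul_of_pos_right hkk (mul_pos_of_neg_of_neg hu hu)
      nlinarith [sq_nonneg (k * w + u), h1, h2, hu]
    -- deriv U is strictly decreasing, hence negative after a
    have hg1cont : Continuous (deriv U) := hUsm.continuous_deriv hone
    have hAnti1 : StrictAntiOn (deriv U) (Set.Icc a b) := by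
      apply strictAntiOn_of_deriv_neg (convex_Icc a b) hg1cont.continuousOn
      intro x hx
      rw [interior_Icc] at hx
      have hx' : x ∈ Set.Icc a b := Set.Ioo_subset_Icc_self hx
      have hD := (hU2 x hx').hasDerivAt (Icc_mem_nhds hx.1 hx.2)
      rw [hD.deriv]
      exact hU2neg x hx'
    have hg1neg : ∀ x ∈ Set.Ioo a b, deriv U x < 0 := by
      intro x hx
      have := hAnti1 haI (Set.Ioo_subset_Icc_self hx) hx.1
      rw [hg1a] at this
      exact this
    have hAnti : StrictAntiOn U (Set.Icc a b) := by
      apply strictAntiOn_of_deriv_neg (convex_Icc a b) hUsm.continuous.continuousOn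
      intro x hx
      rw [interior_Icc] at hx
      exact hg1neg x hx
    have final := hAnti haI hbI hab
    rw [hUa] at final
    exact final
  constructor
  · have := main 1 (by norm_num)
    rw [one_smul] at this
    exact this
  · have := main (-1) (by norm_num)
    rw [neg_one_smul, ← sub_eq_add_neg] at this
    exact this
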